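/- arXiv:2409.03734 — 2 statements merged into one kernel-verified Lean document; each statement's English description precedes it below -/
import Mathlib

section
/- Suppose λ_i = i^{-1-γ} for i ≥ 1 with γ > 0, and let κ = κ(λ, M, Σ) be the unique positive solution of λ/κ + (1/M) Σ_{i=1}^∞ λ_i/(λ_i+κ) = 1 with λ ∈ (0,1), M ≥ 1. Then κ = Θ(max(λ, M^{-1-γ})), i.e., there exist constants c, C > 0 depending only on γ such that c·max(λ, M^{-1-γ}) ≤ κ ≤ C·max(λ, M^{-1-γ}). -/
set_option maxHeartbeats 1000000
open Real Finset

lemma amgm_aux {γ : ℝ} (hγ : 0 < γ) {t : ℝ} (ht : 1 ≤ t) : 1 + γ ≤ t ^ γ + γ / t := by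
  have ht0 : 0 < t := lt_of_lt_of_le one_pos ht
  have h1γ : (0:ℝ) < 1 + γ := by linarith
  have hw : 1/(1+γ) + γ/(1+γ) = 1 := by field_simp
  have h := Real.geom_mean_le_arith_mean2_weighted
    (by positivity : (0:ℝ) ≤ 1/(1+γ)) (by positivity : (0:ℝ) ≤ γ/(1+γ))
    (Real.rpow_nonneg ht0.le γ) (by positivity : (0:ℝ) ≤ 1/t) hw
  have key : (t ^ γ) ^ (1/(1+γ)) * (1/t) ^ (γ/(1+γ)) = 1 := by
    rw [one_div t, ← Real.rpow_neg_one t, ← Real.rpow_mul ht0.le,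
      ← Real.rpow_mul ht0.le, ← Real.rpow_add ht0]
    rw [show γ * (1/(1+γ)) + -1 * (γ/(1+γ)) = 0 by field_simp; ring, Real.rpow_zero]
  rw [key] at h
  have h2 : 1 + γ ≤ (1 + γ) * (1/(1+γ) * t ^ γ + γ/(1+γ) * (1/t)) := by
    nlinarith [h1γ]
  calc 1 + γ ≤ (1 + γ) * (1/(1+γ) * t ^ γ + γ/(1+γ) * (1/t)) := h2
    _ = t ^ γ + γ / t := by field_simp

lemma step_aux {γ : ℝ} (hγ : 0 < γ) {i : ℕ} (hi : 1 ≤ i) :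
    ((i:ℝ)+1) ^ (-(1+γ)) ≤ ((i:ℝ) ^ (-γ) - ((i:ℝ)+1) ^ (-γ)) / γ := by
  have hi0 : (0:ℝ) < i := by exact_mod_cast hi
  have hi1 : (0:ℝ) < (i:ℝ)+1 := by linarith
  set t : ℝ := ((i:ℝ)+1)/(i:ℝ) with htdef
  have ht : 1 ≤ t := by rw [le_div_iff₀ hi0]; linarith
  have h := amgm_aux hγ ht
  -- t^γ = (i+1)^γ * i^(-γ);  γ/t = γ * i/(i+1)
  have htγ : t ^ γ = ((i:ℝ)+1) ^ γ * (i:ℝ) ^ (-γ) := by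
    rw [htdef, Real.div_rpow hi1.le hi0.le, Real.rpow_neg hi0.le, div_eq_mul_inv]
  have htinv : γ / t = γ * (i:ℝ) / ((i:ℝ)+1) := by
    rw [htdef]; field_simp
  rw [htγ, htinv] at h
  rw [le_div_iff₀ hγ]
  have e1 : ((i:ℝ)+1) ^ (-(1+γ)) = (((i:ℝ)+1) ^ γ)⁻¹ * (((i:ℝ)+1))⁻¹ := by
    rw [show -(1+γ) = -γ + -1 by ring, Real.rpow_add hi1, Real.rpow_neg hi1.le,
      Real.rpow_neg_one]
  have e2 : ((i:ℝ)+1) ^ (-γ) = (((i:ℝ)+1) ^ γ)⁻¹ := by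
    rw [Real.rpow_neg hi1.le]
  have hpγ : (0:ℝ) < ((i:ℝ)+1) ^ γ := Real.rpow_pos_of_pos hi1 γ
  rw [e1, e2]
  have h2 : γ * (((i:ℝ)+1))⁻¹ ≤ ((i:ℝ)+1) ^ γ * (i:ℝ) ^ (-γ) - 1 := by
    have h3 : γ * (i:ℝ) / ((i:ℝ)+1) = γ * (1 - (((i:ℝ)+1))⁻¹) := by field_simp; ring
    rw [h3] at h; linarith
  have hc : (((i:ℝ)+1) ^ γ)⁻¹ * (((i:ℝ)+1) ^ γ) = 1 := inv_mul_cancel₀ hpγ.ne'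
  nlinarith [mul_le_mul_of_nonneg_left h2 (inv_nonneg.mpr hpγ.le), hc,
    inv_pos.mpr hpγ, Real.rpow_pos_of_pos hi0 (-γ), inv_pos.mpr hi1]

lemma summable_aa {γ : ℝ} (hγ : 0 < γ) :
    Summable (fun i : ℕ => ((i:ℝ)+1) ^ (-(1+γ))) := by
  have h : Summable (fun n : ℕ => (n:ℝ) ^ (-(1+γ))) :=
    Real.summable_nat_rpow.mpr (by linarith)
  have h2 := (summable_nat_add_iff 1).mpr h
  exact h2.congr (fun i => by push_cast; norm_num)

lemma tail_aux {γ : ℝ} (hγ : 0 < γ) {N : ℕ} (hN : 1 ≤ N) :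
    ∑' i : ℕ, ((↑(i + N):ℝ)+1) ^ (-(1+γ)) ≤ (N:ℝ) ^ (-γ) / γ := by
  have hNpos : (0:ℝ) < N := by exact_mod_cast hN
  apply Real.tsum_le_of_sum_range_le (fun n => Real.rpow_nonneg (by positivity) _)
  intro n
  have key : ∀ i ∈ Finset.range n, ((↑(i+N):ℝ)+1) ^ (-(1+γ)) ≤
      ((↑(i+N):ℝ) ^ (-γ) - ((↑(i+N):ℝ)+1) ^ (-γ)) / γ :=
    fun i _ => step_aux hγ (le_trans hN (Nat.le_add_left N i))
  calc ∑ i ∈ Finset.range n, ((↑(i+N):ℝ)+1) ^ (-(1+γ))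
      ≤ ∑ i ∈ Finset.range n, ((↑(i+N):ℝ) ^ (-γ) - ((↑(i+N):ℝ)+1) ^ (-γ)) / γ :=
        Finset.sum_le_sum key
    _ = (∑ i ∈ Finset.range n, ((fun j : ℕ => ((j:ℝ)+(N:ℝ)) ^ (-γ)) i
          - (fun j : ℕ => ((j:ℝ)+(N:ℝ)) ^ (-γ)) (i+1))) / γ := by
        rw [← Finset.sum_div]; congr 1
        apply Finset.sum_congr rfl; intro i _
        simp only []
        push_cast
        ring_nf
    _ = (((0:ℝ)+(N:ℝ)) ^ (-γ) - ((n:ℝ)+(N:ℝ)) ^ (-γ)) / γ := by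
        rw [Finset.sum_range_sub' (fun j : ℕ => ((j:ℝ)+(N:ℝ)) ^ (-γ))]
        norm_num
    _ ≤ (N:ℝ) ^ (-γ) / γ := by
        have h0 : (0:ℝ) ≤ ((n:ℝ)+(N:ℝ)) ^ (-γ) := Real.rpow_nonneg (by positivity) _
        rw [zero_add]
        gcongr
        linarith

lemma summable_g {γ κ : ℝ} (hγ : 0 < γ) (hκ : 0 < κ) :
    Summable (fun i : ℕ => ((i:ℝ)+1) ^ (-(1+γ)) / (((i:ℝ)+1) ^ (-(1+γ)) + κ)) := by
  apply Summable.of_nonneg_of_le (fun i => by positivity) (fun i => ?_)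
    ((summable_aa hγ).div_const κ)
  have ha : (0:ℝ) < ((i:ℝ)+1) ^ (-(1+γ)) := Real.rpow_pos_of_pos (by positivity) _
  gcongr
  exact le_add_of_nonneg_left ha.le

lemma S_upper {γ κ : ℝ} (hγ : 0 < γ) (hκ : 0 < κ) {N : ℕ} (hN : 1 ≤ N) :
    (∑' i : ℕ, ((i:ℝ)+1) ^ (-(1+γ)) / (((i:ℝ)+1) ^ (-(1+γ)) + κ))
      ≤ N + (N:ℝ) ^ (-γ) / (γ * κ) := by
  have hg := summable_g hγ hκ
  rw [← Summable.sum_add_tsum_nat_add N hg]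
  have h1 : ∑ i ∈ Finset.range N,
      ((i:ℝ)+1) ^ (-(1+γ)) / (((i:ℝ)+1) ^ (-(1+γ)) + κ) ≤ (N:ℝ) := by
    calc ∑ i ∈ Finset.range N, ((i:ℝ)+1) ^ (-(1+γ)) / (((i:ℝ)+1) ^ (-(1+γ)) + κ)
        ≤ ∑ i ∈ Finset.range N, (1:ℝ) := by
          apply Finset.sum_le_sum
          intro i _
          have ha : (0:ℝ) < ((i:ℝ)+1) ^ (-(1+γ)) := Real.rpow_pos_of_pos (by positivity) _
          rw [div_le_one (by positivity)]
          linarith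
      _ = (N:ℝ) := by simp
  have h2 : (∑' i : ℕ, ((↑(i+N):ℝ)+1) ^ (-(1+γ)) / (((↑(i+N):ℝ)+1) ^ (-(1+γ)) + κ))
      ≤ (N:ℝ) ^ (-γ) / (γ * κ) := by
    have hsa : Summable (fun i : ℕ => ((↑(i+N):ℝ)+1) ^ (-(1+γ))) :=
      ((summable_nat_add_iff (f := fun i : ℕ => ((i:ℝ)+1) ^ (-(1+γ))) N).mpr (summable_aa hγ))
    calc (∑' i : ℕ, ((↑(i+N):ℝ)+1) ^ (-(1+γ)) / (((↑(i+N):ℝ)+1) ^ (-(1+γ)) + κ))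
        ≤ ∑' i : ℕ, ((↑(i+N):ℝ)+1) ^ (-(1+γ)) / κ := by
          apply Summable.tsum_le_tsum ?_ ((summable_nat_add_iff
              (f := fun i : ℕ => ((i:ℝ)+1) ^ (-(1+γ)) / (((i:ℝ)+1) ^ (-(1+γ)) + κ)) N).mpr
              (summable_g hγ hκ))
            (hsa.div_const κ)
          intro i
          have ha : (0:ℝ) < ((↑(i+N):ℝ)+1) ^ (-(1+γ)) :=
            Real.rpow_pos_of_pos (by positivity) _
          gcongr
          exact le_add_of_nonneg_left ha.le
      _ = (∑' i : ℕ, ((↑(i+N):ℝ)+1) ^ (-(1+γ))) / κ := tsum_div_const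
      _ ≤ ((N:ℝ) ^ (-γ) / γ) / κ := by gcongr; exact tail_aux hγ hN
      _ = (N:ℝ) ^ (-γ) / (γ * κ) := by rw [div_div]
  exact add_le_add h1 h2

lemma S_lower {γ κ : ℝ} (hγ : 0 < γ) (hκ : 0 < κ) {N : ℕ}
    (hterm : ∀ i < N, κ ≤ ((i:ℝ)+1) ^ (-(1+γ))) :
    (N:ℝ)/2 ≤ ∑' i : ℕ, ((i:ℝ)+1) ^ (-(1+γ)) / (((i:ℝ)+1) ^ (-(1+γ)) + κ) := by
  have hg := summable_g hγ hκ
  calc (N:ℝ)/2 = ∑ i ∈ Finset.range N, (1/2 : ℝ) := by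
        rw [Finset.sum_const, Finset.card_range]; push_cast; ring
    _ ≤ ∑ i ∈ Finset.range N, ((i:ℝ)+1) ^ (-(1+γ)) / (((i:ℝ)+1) ^ (-(1+γ)) + κ) := by
        apply Finset.sum_le_sum
        intro i hi
        have ha : (0:ℝ) < ((i:ℝ)+1) ^ (-(1+γ)) := Real.rpow_pos_of_pos (by positivity) _
        rw [le_div_iff₀ (by positivity)]
        have := hterm i (Finset.mem_range.mp hi)
        linarith
    _ ≤ _ := Summable.sum_le_tsum _ (fun i _ => by positivity) hg

/-- With power-law eigenvalues λ_i = i^{-1-γ}, the effective regularizer κ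
(the positive solution of λ/κ + (1/M)Σᵢ λᵢ/(λᵢ+κ) = 1) satisfies
κ = Θ(max(λ, M^{-1-γ})), with constants depending only on γ. -/
theorem stmt13 (γ : ℝ) (hγ : 0 < γ) :
    ∃ c C : ℝ, 0 < c ∧ 0 < C ∧
      ∀ lam M κ : ℝ, lam ∈ Set.Ioo (0:ℝ) 1 → 1 ≤ M → 0 < κ →
        lam / κ +
            (1 / M) * ∑' i : ℕ,
              ((i : ℝ) + 1) ^ (-(1 + γ)) / (((i : ℝ) + 1) ^ (-(1 + γ)) + κ) = 1 →
        c * max lam (M ^ (-(1 + γ))) ≤ κ ∧ κ ≤ C * max lam (M ^ (-(1 + γ))) := by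
  have h1γ : (0:ℝ) < 1 + γ := by linarith
  set B : ℝ := 2 * (2 + 1/γ) with hBdef
  have hB : 0 < B := by positivity
  have hB1 : (1:ℝ) ≤ B := by
    have : 0 < 1/γ := by positivity
    rw [hBdef]; nlinarith
  have hc0 : (0:ℝ) < 4 ^ (-(1+γ)) := Real.rpow_pos_of_pos (by norm_num) _
  have hc1 : (4:ℝ) ^ (-(1+γ)) ≤ 1 :=
    Real.rpow_le_one_of_one_le_of_nonpos (by norm_num) (by linarith)
  have hCB : (0:ℝ) < B ^ (1+γ) := Real.rpow_pos_of_pos hB _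
  refine ⟨4 ^ (-(1+γ)), 2 + B ^ (1+γ), hc0, by positivity, ?_⟩
  rintro lam M κ ⟨hlam0, hlam1⟩ hM hκ heq
  have hM0 : (0:ℝ) < M := lt_of_lt_of_le one_pos hM
  set S := ∑' i : ℕ, ((i:ℝ)+1) ^ (-(1+γ)) / (((i:ℝ)+1) ^ (-(1+γ)) + κ) with hSdef
  have hS0 : 0 ≤ S := tsum_nonneg (fun i => by positivity)
  have hMe0 : (0:ℝ) < M ^ (-(1+γ)) := Real.rpow_pos_of_pos hM0 _
  have hmax0 : 0 < max lam (M ^ (-(1+γ))) := lt_max_of_lt_left hlam0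
  have hlamκ : lam ≤ κ := by
    have h : lam/κ ≤ 1 := by nlinarith [mul_nonneg (by positivity : (0:ℝ) ≤ 1/M) hS0]
    exact (div_le_one hκ).mp h
  have hSleM : S ≤ M := by
    have h : (1/M) * S ≤ 1 := by nlinarith [div_pos hlam0 hκ]
    calc S = M * ((1/M) * S) := by field_simp
      _ ≤ M * 1 := by nlinarith
      _ = M := mul_one M
  set x := κ ^ (-(1/(1+γ))) with hxdef
  have hx0 : 0 < x := Real.rpow_pos_of_pos hκ _
  have hxκ : x ^ (-(1+γ)) = κ := by
    rw [hxdef, ← Real.rpow_mul hκ.le,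
      show -(1/(1+γ)) * -(1+γ) = 1 by field_simp, Real.rpow_one]
  have hxinv : x ^ (1+γ) = κ⁻¹ := by
    rw [hxdef, ← Real.rpow_mul hκ.le,
      show -(1/(1+γ)) * (1+γ) = -1 by field_simp, Real.rpow_neg_one]
  constructor
  · -- LOWER BOUND
    have hcM : 4 ^ (-(1+γ)) * M ^ (-(1+γ)) ≤ κ := by
      rcases le_or_gt 1 κ with h1κ | h1κ
      · have c2 : M ^ (-(1+γ)) ≤ 1 :=
          Real.rpow_le_one_of_one_le_of_nonpos hM (by linarith)
        nlinarith
      · have hx1 : 1 ≤ x :=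
          Real.one_le_rpow_of_pos_of_le_one_of_nonpos hκ h1κ.le (by
            rw [neg_nonpos]; positivity)
        set N := ⌊x⌋₊ with hNdef
        have hN1 : 1 ≤ N := Nat.le_floor (by exact_mod_cast hx1)
        have hNx : (N:ℝ) ≤ x := Nat.floor_le hx0.le
        have hterm : ∀ i < N, κ ≤ ((i:ℝ)+1) ^ (-(1+γ)) := by
          intro i hi
          have hi1 : (i+1 : ℕ) ≤ N := hi
          have hix : (i:ℝ)+1 ≤ x := by
            have : ((i+1:ℕ):ℝ) ≤ (N:ℝ) := by exact_mod_cast hi1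
            push_cast at this; linarith
          rw [← hxκ]
          exact Real.rpow_le_rpow_of_nonpos (by positivity) hix (by linarith)
        have hSl := S_lower hγ hκ hterm
        have hNR1 : (1:ℝ) ≤ (N:ℝ) := by exact_mod_cast hN1
        have hNhalf : x ≤ 2*N := by linarith [Nat.lt_floor_add_one x]
        have hxM : x ≤ 4*M := by nlinarith
        have hinv : κ⁻¹ ≤ (4*M) ^ (1+γ) := by
          rw [← hxinv]
          exact Real.rpow_le_rpow hx0.le hxM (by linarith)
        have h4M : (4*M:ℝ) ^ (-(1+γ)) ≤ κ := by
          rw [Real.rpow_neg (by positivity)]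
          have h4Mp : (0:ℝ) < (4*M) ^ (1+γ) := Real.rpow_pos_of_pos (by linarith) _
          exact (inv_le_comm₀ h4Mp hκ).mpr hinv
        rw [← Real.mul_rpow (by norm_num) hM0.le]
        exact h4M
    refine le_trans (le_of_eq (mul_max_of_nonneg _ _ hc0.le)) (max_le ?_ hcM)
    nlinarith
  · -- UPPER BOUND
    have hdich : 1/2 ≤ lam/κ ∨ 1/2 ≤ (1/M) * S := by
      by_contra hcon
      push_neg at hcon
      obtain ⟨u, v⟩ := hcon
      linarith
    have hfinal : κ ≤ 2 * max lam (M ^ (-(1+γ))) ∨ κ ≤ B ^ (1+γ) * M ^ (-(1+γ)) := by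
      rcases hdich with hd | hd
      · left
        rw [le_div_iff₀ hκ] at hd
        have : κ ≤ 2 * lam := by linarith
        have := le_max_left lam (M ^ (-(1+γ)))
        linarith
      · right
        have hM2S : M ≤ 2 * S := by
          have hh : M * ((1/M) * S) = S := by field_simp
          nlinarith
        rcases le_or_gt κ 1 with h1κ | h1κ
        · -- κ ≤ 1
          have hx1 : 1 ≤ x :=
            Real.one_le_rpow_of_pos_of_le_one_of_nonpos hκ h1κ (by
              rw [neg_nonpos]; positivity)
          set N := ⌊x⌋₊ + 1 with hNdef
          have hN1 : 1 ≤ N := Nat.le_add_left 1 _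
          have hxN : x ≤ (N:ℝ) := by
            have := Nat.lt_floor_add_one x
            push_cast [hNdef]; push_cast at this ⊢; linarith
          have hN2x : (N:ℝ) ≤ 2*x := by
            have h1 : (⌊x⌋₊:ℝ) ≤ x := Nat.floor_le hx0.le
            push_cast [hNdef]; linarith
          have hSu := S_upper hγ hκ hN1
          rw [← hSdef] at hSu
          have hNg : (N:ℝ) ^ (-γ) ≤ x ^ (-γ) :=
            Real.rpow_le_rpow_of_nonpos hx0 hxN (by linarith)
          have hxx : x ^ (-γ) * x ^ (1+γ) = x := by
            rw [← Real.rpow_add hx0, show -γ + (1+γ) = 1 by ring, Real.rpow_one]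
          have hxgκ : x ^ (-γ) / κ = x := by
            rw [div_eq_mul_inv, ← hxinv, hxx]
          have hSA : 2 * S ≤ B * x := by
            have e1 : (N:ℝ) ^ (-γ) / (γ * κ) ≤ (x ^ (-γ) / κ) / γ := by
              rw [div_div]
              rw [show γ * κ = κ * γ by ring] at *
              gcongr
            rw [hxgκ] at e1
            have h2S : S ≤ 2*x + x/γ := by linarith
            rw [hBdef]
            calc 2 * S ≤ 2*(2*x + x/γ) := by linarith
              _ = 2 * (2 + 1/γ) * x := by field_simp
          have hMBx : M / B ≤ x := by
            rw [div_le_iff₀ hB]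
            linarith [hSA, hM2S, (mul_comm x B : x*B = B*x)]
          have hMB0 : 0 < M / B := by positivity
          have hinv : (M/B) ^ (1+γ) ≤ κ⁻¹ := by
            rw [← hxinv]
            exact Real.rpow_le_rpow hMB0.le hMBx (by linarith)
          have hMBp : (0:ℝ) < (M/B) ^ (1+γ) := Real.rpow_pos_of_pos hMB0 _
          have hκle : κ ≤ ((M/B) ^ (1+γ))⁻¹ :=
            (le_inv_comm₀ hMBp hκ).mp hinv
          have hid : ((M/B) ^ (1+γ))⁻¹ = B ^ (1+γ) * M ^ (-(1+γ)) := by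
            rw [Real.div_rpow hM0.le hB.le, inv_div, Real.rpow_neg hM0.le]
            ring
          rw [hid] at hκle
          exact hκle
        · -- κ > 1
          have hT : ∑' i : ℕ, ((i:ℝ)+1) ^ (-(1+γ)) ≤ 1 + 1/γ := by
            rw [← Summable.sum_add_tsum_nat_add 1 (summable_aa hγ)]
            have t1 : ∑ i ∈ Finset.range 1, ((i:ℝ)+1) ^ (-(1+γ)) = 1 := by
              simp [Real.one_rpow]
            have t2 := tail_aux hγ (N := 1) le_rfl
            rw [Nat.cast_one, Real.one_rpow] at t2
            linarith
          have hST : S ≤ (∑' i : ℕ, ((i:ℝ)+1) ^ (-(1+γ))) / κ := by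
            rw [hSdef, ← tsum_div_const]
            apply Summable.tsum_le_tsum ?_ (summable_g hγ hκ) ((summable_aa hγ).div_const κ)
            intro i
            have ha : (0:ℝ) < ((i:ℝ)+1) ^ (-(1+γ)) :=
              Real.rpow_pos_of_pos (by positivity) _
            gcongr
            exact le_add_of_nonneg_left ha.le
          have hSB : S ≤ B / (2*κ) := by
            calc S ≤ (1 + 1/γ) / κ := le_trans hST (by gcongr)
              _ ≤ (B/2) / κ := by
                  gcongr
                  rw [hBdef]; linarith [one_div_pos.mpr hγ]
              _ = B / (2*κ) := by rw [div_div]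
          have hMκB : M * κ ≤ B := by
            have : M ≤ B/κ := by
              calc M ≤ 2 * S := hM2S
                _ ≤ 2 * (B/(2*κ)) := by linarith
                _ = B/κ := by field_simp
            rw [le_div_iff₀ hκ] at this
            exact this
          have hMB : M ≤ B := by nlinarith
          have hκB : κ ≤ B / M := by
            rw [le_div_iff₀ hM0]; nlinarith
          -- M^{-(1+γ)} = M⁻¹ * M^{-γ} and M^{-γ} ≥ B^{-γ}
          have hsplit : M ^ (-(1+γ)) = M⁻¹ * M ^ (-γ) := by
            rw [show -(1+γ) = -1 + -γ by ring, Real.rpow_add hM0, Real.rpow_neg_one]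
          have hMγ : B ^ (-γ) ≤ M ^ (-γ) :=
            Real.rpow_le_rpow_of_nonpos hM0 hMB (by linarith)
          have hBB : B ^ (1+γ) * B ^ (-γ) = B := by
            rw [← Real.rpow_add hB, show (1+γ) + -γ = 1 by ring, Real.rpow_one]
          calc κ ≤ B / M := hκB
            _ = (B ^ (1+γ) * B ^ (-γ)) * M⁻¹ := by rw [hBB]; ring
            _ ≤ (B ^ (1+γ) * M ^ (-γ)) * M⁻¹ := by
                have hMi : (0:ℝ) < M⁻¹ := by positivity
                exact mul_le_mul_of_nonneg_right
                  (mul_le_mul_of_nonneg_left hMγ hCB.le) hMi.le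
            _ = B ^ (1+γ) * M ^ (-(1+γ)) := by rw [hsplit]; ring
    rcases hfinal with h | h
    · nlinarith [hCB, hmax0]
    · have := le_max_right lam (M ^ (-(1+γ)))
      nlinarith [hCB, hmax0, hMe0]
end

section
/- For γ > 0 and κ ∈ (0,1), the sum Σ_{i=1}^∞ i^{-1-γ}/(i^{-1-γ} + κ) is Θ(κ^{-1/(1+γ)}): there exist constants c, C > 0 depending only on γ with c κ^{-1/(1+γ)} ≤ Σ_{i=1}^∞ i^{-1-γ}/(i^{-1-γ}+κ) ≤ C κ^{-1/(1+γ)}. -/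
open Real

/-- Key convexity/Bernoulli step: `γ (x+1)^{-(1+γ)} ≤ x^{-γ} - (x+1)^{-γ}` for `x ≥ 1`. -/
lemma stmt14_bern {γ x : ℝ} (hγ : 0 < γ) (hx : 1 ≤ x) :
    γ * (x + 1) ^ (-(1 + γ)) ≤ x ^ (-γ) - (x + 1) ^ (-γ) := by
  have hx0 : (0:ℝ) < x := lt_of_lt_of_le one_pos hx
  have hx1 : (0:ℝ) < x + 1 := by linarith
  have hA : (0:ℝ) < x ^ γ := Real.rpow_pos_of_pos hx0 γ
  have hB : (0:ℝ) < (x + 1) ^ γ := Real.rpow_pos_of_pos hx1 γ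
  have hs1x : (-1:ℝ) ≤ 1 / x := le_trans (by norm_num) (by positivity : (0:ℝ) ≤ 1 / x)
  have hb : 1 + (1 + γ) * (1 / x) ≤ (1 + 1 / x) ^ (1 + γ) :=
    one_add_mul_self_le_rpow_one_add hs1x (by linarith)
  have h1 : (1:ℝ) + 1 / x = (x + 1) / x := by field_simp
  rw [h1, Real.div_rpow hx1.le hx0.le] at hb
  have hxg : x ^ (1 + γ) = x * x ^ γ := by
    rw [Real.rpow_add hx0, Real.rpow_one]
  have hxg1 : (x + 1) ^ (1 + γ) = (x + 1) * (x + 1) ^ γ := by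
    rw [Real.rpow_add hx1, Real.rpow_one]
  rw [hxg, hxg1, le_div_iff₀ (by positivity)] at hb
  have key : (x + (1 + γ)) * x ^ γ ≤ (x + 1) * ((x + 1) ^ γ) := by
    calc (x + (1 + γ)) * x ^ γ = (1 + (1 + γ) * (1 / x)) * (x * x ^ γ) := by
          field_simp
      _ ≤ (x + 1) * ((x + 1) ^ γ) := hb
  rw [Real.rpow_neg hx0.le, Real.rpow_neg hx1.le, Real.rpow_neg hx1.le, hxg1]
  have e1 : γ * ((x + 1) * (x + 1) ^ γ)⁻¹ = γ / ((x + 1) * (x + 1) ^ γ) := by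
    rw [div_eq_mul_inv]
  have e2 : (x ^ γ)⁻¹ - ((x + 1) ^ γ)⁻¹ = ((x + 1) ^ γ - x ^ γ) / (x ^ γ * (x + 1) ^ γ) := by
    field_simp
  rw [e1, e2, div_le_div_iff₀ (by positivity) (by positivity)]
  nlinarith [mul_le_mul_of_nonneg_left key hB.le, hA, hB, mul_pos hA hB]

/-- Tail bound: `∑_{i≥0} (i+N+1)^{-(1+γ)} ≤ N^{-γ}/γ` for `N ≥ 1`. -/
lemma stmt14_tail {γ : ℝ} (hγ : 0 < γ) {N : ℕ} (hN : 1 ≤ N) :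
    ∑' i : ℕ, ((i : ℝ) + N + 1) ^ (-(1 + γ)) ≤ (N : ℝ) ^ (-γ) / γ := by
  have hN1 : (1:ℝ) ≤ (N : ℝ) := by exact_mod_cast hN
  apply tsum_le_of_sum_range_le (fun i => Real.rpow_nonneg (by positivity) _)
  intro n
  have hstep : ∀ i : ℕ, ((i : ℝ) + N + 1) ^ (-(1 + γ)) ≤
      (((i : ℝ) + N) ^ (-γ) - ((i + 1 : ℕ) + (N : ℝ)) ^ (-γ)) / γ := by
    intro i
    have hx : (1:ℝ) ≤ (i : ℝ) + N := by
      have : (0:ℝ) ≤ (i : ℝ) := Nat.cast_nonneg i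
      linarith
    have hb := stmt14_bern hγ hx
    rw [le_div_iff₀ hγ, mul_comm]
    have hcast : ((i + 1 : ℕ) : ℝ) + (N : ℝ) = ((i : ℝ) + N) + 1 := by push_cast; ring
    rw [hcast]
    convert hb using 3
  calc ∑ i ∈ Finset.range n, ((i : ℝ) + N + 1) ^ (-(1 + γ))
      ≤ ∑ i ∈ Finset.range n,
          ((((i : ℝ) + N) ^ (-γ) - ((i + 1 : ℕ) + (N : ℝ)) ^ (-γ)) / γ) :=
        Finset.sum_le_sum fun i _ => hstep i
    _ = (∑ i ∈ Finset.range n,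
          (((i : ℝ) + N) ^ (-γ) - (((i + 1 : ℕ) : ℝ) + N) ^ (-γ))) / γ := by
        rw [Finset.sum_div]
    _ = (((0 : ℕ) + (N : ℝ)) ^ (-γ) - ((n : ℝ) + N) ^ (-γ)) / γ := by
        rw [Finset.sum_range_sub' (fun i : ℕ => ((i : ℝ) + N) ^ (-γ))]
    _ ≤ (N : ℝ) ^ (-γ) / γ := by
        have h0 : (0:ℝ) ≤ ((n : ℝ) + N) ^ (-γ) := Real.rpow_nonneg (by positivity) _
        simp only [Nat.cast_zero, zero_add]
        gcongr
        linarith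

lemma stmt14_summable_a {γ : ℝ} (hγ : 0 < γ) :
    Summable (fun i : ℕ => ((i : ℝ) + 1) ^ (-(1 + γ))) := by
  have h : Summable (fun n : ℕ => (n : ℝ) ^ (-(1 + γ))) :=
    Real.summable_nat_rpow.mpr (by linarith)
  have h2 := (summable_nat_add_iff 1).mpr h
  exact h2.congr fun i => by push_cast; ring_nf

/-- For γ > 0 and κ ∈ (0,1),
Σ_{i≥1} i^{-1-γ}/(i^{-1-γ}+κ) = Θ(κ^{-1/(1+γ)}) with constants depending only on γ. -/
theorem stmt14 (γ : ℝ) (hγ : 0 < γ) :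
    ∃ c C : ℝ, 0 < c ∧ 0 < C ∧
      ∀ κ : ℝ, κ ∈ Set.Ioo (0:ℝ) 1 →
        c * κ ^ (-1 / (1 + γ)) ≤
            (∑' i : ℕ, ((i : ℝ) + 1) ^ (-(1 + γ)) / (((i : ℝ) + 1) ^ (-(1 + γ)) + κ)) ∧
        (∑' i : ℕ, ((i : ℝ) + 1) ^ (-(1 + γ)) / (((i : ℝ) + 1) ^ (-(1 + γ)) + κ)) ≤
          C * κ ^ (-1 / (1 + γ)) := by
  refine ⟨1/4, 2 + 1/γ, by norm_num, by positivity, ?_⟩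
  rintro κ ⟨hκ0, hκ1⟩
  have hγ1 : (0:ℝ) < 1 + γ := by linarith
  set T : ℝ := κ ^ (-1 / (1 + γ)) with hTdef
  have hT0 : 0 < T := Real.rpow_pos_of_pos hκ0 _
  have hT1 : 1 < T := by
    rw [hTdef]
    rw [Real.one_lt_rpow_iff_of_pos hκ0]
    right
    constructor
    · exact hκ1
    · rw [neg_div]; exact neg_neg_iff_pos.mpr (by positivity)
  have hκT : κ = T ^ (-(1 + γ)) := by
    rw [hTdef, ← Real.rpow_mul hκ0.le,
      show -1 / (1 + γ) * (-(1 + γ)) = 1 by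
        rw [div_mul_eq_mul_div, neg_mul_neg, one_mul, div_self hγ1.ne'],
      Real.rpow_one]
  set a : ℕ → ℝ := fun i => ((i : ℝ) + 1) ^ (-(1 + γ)) with ha
  have ha_pos : ∀ i, 0 < a i := fun i => Real.rpow_pos_of_pos (by positivity) _
  set f : ℕ → ℝ := fun i => a i / (a i + κ) with hf
  have hf_nonneg : ∀ i, 0 ≤ f i := fun i => by
    have := ha_pos i; positivity
  have hf_le_one : ∀ i, f i ≤ 1 := fun i => by
    rw [hf]
    exact div_le_one_of_le₀ (by linarith [ha_pos i]) (by linarith [ha_pos i])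
  have hf_le : ∀ i, f i ≤ a i * κ⁻¹ := fun i => by
    rw [hf, ← div_eq_mul_inv]
    exact div_le_div_of_nonneg_left (ha_pos i).le hκ0 (by linarith [ha_pos i])
  have hsa : Summable a := stmt14_summable_a hγ
  have hsf : Summable f :=
    Summable.of_nonneg_of_le hf_nonneg hf_le (hsa.mul_right κ⁻¹)
  constructor
  · -- lower bound
    set n : ℕ := ⌊T⌋₊ with hn
    have hn1 : 1 ≤ n := Nat.le_floor (by exact_mod_cast hT1.le)
    have hnT : (n : ℝ) ≤ T := Nat.floor_le hT0.le
    have hTn : T / 2 ≤ (n : ℝ) := by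
      rcases le_or_gt T 2 with h | h
      · have : (1:ℝ) ≤ (n : ℝ) := by exact_mod_cast hn1
        linarith
      · have := Nat.sub_one_lt_floor T
        rw [← hn] at this
        linarith
    have hterm : ∀ i ∈ Finset.range n, (1:ℝ)/2 ≤ f i := by
      intro i hi
      have hi' : (i : ℝ) + 1 ≤ T := by
        have : i + 1 ≤ n := Finset.mem_range.mp hi
        have : ((i + 1 : ℕ) : ℝ) ≤ (n : ℝ) := by exact_mod_cast this
        push_cast at this
        linarith
      have hκa : κ ≤ a i := by
        rw [hκT, ha]
        exact Real.rpow_le_rpow_of_nonpos (by positivity) hi' (by linarith)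
      rw [hf, le_div_iff₀ (by linarith [ha_pos i])]
      linarith [ha_pos i]
    have hsum : (n : ℝ) * (1/2) ≤ ∑ i ∈ Finset.range n, f i := by
      calc (n : ℝ) * (1/2) = ∑ _i ∈ Finset.range n, (1:ℝ)/2 := by
            rw [Finset.sum_const, Finset.card_range]; ring
        _ ≤ ∑ i ∈ Finset.range n, f i := Finset.sum_le_sum hterm
    have htsum : ∑ i ∈ Finset.range n, f i ≤ ∑' i, f i :=
      hsf.sum_le_tsum _ (fun i _ => hf_nonneg i)
    calc 1/4 * T ≤ (n : ℝ) * (1/2) := by linarith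
      _ ≤ ∑' i, f i := le_trans hsum htsum
  · -- upper bound
    set N : ℕ := ⌈T⌉₊ with hN
    have hN1 : 1 ≤ N := Nat.one_le_ceil_iff.mpr hT0
    have hTN : T ≤ (N : ℝ) := Nat.le_ceil T
    have hNT : (N : ℝ) ≤ 2 * T := by
      have := Nat.ceil_lt_add_one hT0.le
      rw [← hN] at this
      linarith
    rw [← hsf.sum_add_tsum_nat_add N]
    have hhead : ∑ i ∈ Finset.range N, f i ≤ (N : ℝ) := by
      calc ∑ i ∈ Finset.range N, f i ≤ ∑ _i ∈ Finset.range N, (1:ℝ) :=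
            Finset.sum_le_sum fun i _ => hf_le_one i
        _ = (N : ℝ) := by simp
    have htail : ∑' i, f (i + N) ≤ T / γ := by
      have hs1 : Summable (fun i => f (i + N)) := (summable_nat_add_iff N).mpr hsf
      have hs2 : Summable (fun i : ℕ => a (i + N) * κ⁻¹) :=
        ((summable_nat_add_iff N).mpr hsa).mul_right κ⁻¹
      have h1 : ∑' i, f (i + N) ≤ ∑' i : ℕ, a (i + N) * κ⁻¹ :=
        hs1.tsum_le_tsum (fun i => hf_le (i + N)) hs2
      have h2 : ∑' i : ℕ, a (i + N) * κ⁻¹ = (∑' i : ℕ, a (i + N)) * κ⁻¹ :=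
        tsum_mul_right
      have h3 : ∑' i : ℕ, a (i + N) ≤ (N : ℝ) ^ (-γ) / γ := by
        have := stmt14_tail hγ hN1
        refine le_trans (le_of_eq ?_) this
        congr 1
        funext i
        rw [ha]
        push_cast
        ring_nf
      have h4 : (N : ℝ) ^ (-γ) ≤ T ^ (-γ) :=
        Real.rpow_le_rpow_of_nonpos hT0 hTN (by linarith)
      have hκinv : κ⁻¹ = T ^ (1 + γ) := by
        rw [hκT, Real.rpow_neg hT0.le, inv_inv]
      have h5 : T ^ (-γ) * T ^ (1 + γ) = T := by
        rw [← Real.rpow_add hT0]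
        norm_num
      calc ∑' i, f (i + N) ≤ (∑' i : ℕ, a (i + N)) * κ⁻¹ := by rw [← h2]; exact h1
        _ ≤ ((N : ℝ) ^ (-γ) / γ) * κ⁻¹ := by
            have hκn : (0:ℝ) ≤ κ⁻¹ := by positivity
            exact mul_le_mul_of_nonneg_right h3 hκn
        _ ≤ (T ^ (-γ) / γ) * T ^ (1 + γ) := by
            rw [hκinv]
            have hTp : (0:ℝ) ≤ T ^ (1 + γ) := by positivity
            exact mul_le_mul_of_nonneg_right (by gcongr) hTp
        _ = T / γ := by rw [div_mul_eq_mul_div, h5]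
    calc ∑ i ∈ Finset.range N, f i + ∑' i, f (i + N) ≤ (N : ℝ) + T / γ := by
          linarith
      _ ≤ 2 * T + T / γ := by linarith
      _ = (2 + 1/γ) * T := by field_simp
end
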